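/- Let β, β' : ℤ → ℝ be functions taking values in {0,1}. For integers i ≤ n define K(n,i) := Σ_{m=i}^{n} (∏_{j=m+1}^{n} (β'(j) − β(j))) · β(m). Then K(n,i) ∈ {0,1} for every pair of integers i ≤ n. -/

import Mathlib

lemma kpz_Icc_insert (a b : ℤ) (h : a ≤ b + 1) :
    Finset.Icc a (b + 1) = insert (b + 1) (Finset.Icc a b) := by
  ext x
  simp only [Finset.mem_Icc, Finset.mem_insert]
  omega

/-- For `β, β' : ℤ → ℝ` taking values in `{0,1}` and integers `i ≤ n`,
the quantity `K(n,i) = ∑_{m=i}^{n} (∏_{j=m+1}^{n} (β'(j) − β(j))) · β(m)` lies in `{0,1}`. -/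
theorem kpz_K_mem_zero_one (β β' : ℤ → ℝ)
    (hβ : ∀ m, β m = 0 ∨ β m = 1) (hβ' : ∀ m, β' m = 0 ∨ β' m = 1)
    (i n : ℤ) (hin : i ≤ n) :
    (∑ m ∈ Finset.Icc i n, (∏ j ∈ Finset.Icc (m + 1) n, (β' j - β j)) * β m) = 0 ∨
    (∑ m ∈ Finset.Icc i n, (∏ j ∈ Finset.Icc (m + 1) n, (β' j - β j)) * β m) = 1 := by
  refine Int.le_induction (m := i)
    (motive := fun n _ =>
      (∑ m ∈ Finset.Icc i n, (∏ j ∈ Finset.Icc (m + 1) n, (β' j - β j)) * β m) = 0 ∨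
      (∑ m ∈ Finset.Icc i n, (∏ j ∈ Finset.Icc (m + 1) n, (β' j - β j)) * β m) = 1)
    ?_ (fun n hn ih => ?_) n hin
  · simpa [Finset.Icc_self, Finset.Icc_eq_empty (show ¬ i + 1 ≤ i by omega)] using hβ i
  · beta_reduce at ih ⊢
    have key : (∑ m ∈ Finset.Icc i (n + 1),
          (∏ j ∈ Finset.Icc (m + 1) (n + 1), (β' j - β j)) * β m)
        = (β' (n + 1) - β (n + 1)) *
            (∑ m ∈ Finset.Icc i n, (∏ j ∈ Finset.Icc (m + 1) n, (β' j - β j)) * β m)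
          + β (n + 1) := by
      rw [kpz_Icc_insert i n (by omega),
        Finset.sum_insert (by simp [Finset.mem_Icc])]
      have h : ∀ m ∈ Finset.Icc i n,
          (∏ j ∈ Finset.Icc (m + 1) (n + 1), (β' j - β j)) * β m
          = (β' (n + 1) - β (n + 1)) *
              ((∏ j ∈ Finset.Icc (m + 1) n, (β' j - β j)) * β m) := by
        intro m hm
        simp only [Finset.mem_Icc] at hm
        rw [kpz_Icc_insert (m + 1) n (by omega),
          Finset.prod_insert (by simp [Finset.mem_Icc])]
        ring
      rw [Finset.sum_congr rfl h, ← Finset.mul_sum]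
      simp [Finset.Icc_eq_empty (show ¬ n + 1 + 1 ≤ n + 1 by omega)]
      ring
    rw [key]
    rcases hβ (n + 1) with h1 | h1 <;> rcases hβ' (n + 1) with h2 | h2 <;>
      rcases ih with h3 | h3 <;> simp [h1, h2, h3]
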